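/- For a convex cone M ⊂ Sym²(ℝⁿ) containing 𝒫 with Riesz characteristic p_M, one has 𝒫(p) ⊂ M if and only if p ≤ p_M, where 𝒫(p) is the generalized p-convexity cone. -/

import Mathlib

open Pointwise

/-- The increasingly ordered eigenvalues `λ_1(A) ≤ … ≤ λ_n(A)` of a symmetric matrix. -/
noncomputable def sortedEig {n : ℕ} (A : Matrix (Fin n) (Fin n) ℝ) (hA : A.IsHermitian) :
    Fin n → ℝ :=
  hA.eigenvalues ∘ Tuple.sort hA.eigenvalues

/-- The partial eigenvalue sum `λ_1(A) + ⋯ + λ_{⌊p⌋}(A) + (p − ⌊p⌋) λ_{⌊p⌋+1}(A)`. -/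
noncomputable def pSum {n : ℕ} (p : ℝ) (A : Matrix (Fin n) (Fin n) ℝ)
    (hA : A.IsHermitian) : ℝ :=
  ∑ i : Fin n,
    (if (i : ℕ) + 1 ≤ ⌊p⌋₊ then (1 : ℝ) else if (i : ℕ) = ⌊p⌋₊ then p - ⌊p⌋₊ else 0) *
      sortedEig A hA i

/-- The generalized `p`-convexity cone `𝒫(p) ⊂ Sym²(ℝⁿ)`. -/
noncomputable def pCone (n : ℕ) (p : ℝ) : Set (Matrix (Fin n) (Fin n) ℝ) :=
  {A | ∃ hA : A.IsHermitian, 0 ≤ pSum p A hA}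

/-- The Riesz characteristic `p_M = sup {p : I − p P_e ∈ M for all unit e}`, as an
extended real number. -/
noncomputable def rieszCharE {n : ℕ} (M : Set (Matrix (Fin n) (Fin n) ℝ)) : EReal :=
  sSup {x : EReal | ∃ p : ℝ, x = (p : EReal) ∧ ∀ e : Fin n → ℝ, ∑ i, e i ^ 2 = 1 →
    (1 : Matrix (Fin n) (Fin n) ℝ) - p • Matrix.vecMulVec e e ∈ M}


section AuxRiesz
open Matrix

lemma eigvec_unit {n : ℕ} {A : Matrix (Fin n) (Fin n) ℝ} (hA : A.IsHermitian) (i : Fin n) :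
    ∑ j, (hA.eigenvectorBasis i) j ^ 2 = 1 := by
  have h := hA.eigenvectorBasis.orthonormal.1 i
  have h2 : @inner ℝ _ _ (hA.eigenvectorBasis i) (hA.eigenvectorBasis i) = (1:ℝ) := by
    rw [real_inner_self_eq_norm_sq, h]; norm_num
  rw [← h2, PiLp.inner_apply]
  simp [sq, RCLike.inner_apply]


lemma herm_smul {n : ℕ} (c : ℝ) {A : Matrix (Fin n) (Fin n) ℝ} (hA : A.IsHermitian) :
    (c • A).IsHermitian := by
  unfold Matrix.IsHermitian at *
  ext i j
  have := congrFun (congrFun hA i) j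
  simp [Matrix.conjTranspose_apply] at this ⊢
  left; exact this

lemma vmv_mulVec {n : ℕ} (e x : Fin n → ℝ) :
    Matrix.vecMulVec e e *ᵥ x = (e ⬝ᵥ x) • e := by
  ext i
  simp [Matrix.mulVec, Matrix.vecMulVec_apply, dotProduct, Finset.mul_sum, mul_assoc,
    mul_comm, mul_left_comm]

lemma psd_vmv {n : ℕ} (e : Fin n → ℝ) : (Matrix.vecMulVec e e).PosSemidef := by
  refine Matrix.posSemidef_iff_dotProduct_mulVec.mpr ⟨?_, ?_⟩
  · ext i j; simp [Matrix.vecMulVec_apply, Matrix.conjTranspose_apply, mul_comm]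
  · intro x
    rw [vmv_mulVec, dotProduct_smul]
    have : star x ⬝ᵥ e = e ⬝ᵥ x := by simp [dotProduct, mul_comm]
    rw [smul_eq_mul, this]
    exact mul_self_nonneg _

lemma psd_smul {n : ℕ} {c : ℝ} (hc : 0 ≤ c) {A : Matrix (Fin n) (Fin n) ℝ}
    (hA : A.PosSemidef) : (c • A).PosSemidef := by
  refine Matrix.posSemidef_iff_dotProduct_mulVec.mpr ⟨herm_smul c hA.1, fun x => ?_⟩
  rw [Matrix.smul_mulVec, dotProduct_smul, smul_eq_mul]
  exact mul_nonneg hc (hA.dotProduct_mulVec_nonneg x)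

lemma rank_one_decomp {n : ℕ} {A : Matrix (Fin n) (Fin n) ℝ} (hA : A.IsHermitian) :
    A = ∑ i, hA.eigenvalues i •
      Matrix.vecMulVec (⇑(hA.eigenvectorBasis i)) (⇑(hA.eigenvectorBasis i)) := by
  conv_lhs => rw [hA.spectral_theorem]
  ext a b
  simp only [Unitary.conjStarAlgAut_apply, Matrix.mul_apply, Matrix.diagonal_apply, Function.comp_apply,
    Matrix.sum_apply, Matrix.smul_apply, Matrix.vecMulVec_apply,
    Matrix.IsHermitian.eigenvectorUnitary_apply, smul_eq_mul, Matrix.star_apply,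
    star_trivial, mul_ite, mul_zero, Finset.sum_ite_eq', Finset.mem_univ, if_true,
    RCLike.ofReal_real_eq_id, id]
  exact Finset.sum_congr rfl fun i _ => by ring

lemma trace_eq_sum_eig {n : ℕ} {A : Matrix (Fin n) (Fin n) ℝ} (hA : A.IsHermitian) :
    A.trace = ∑ i, hA.eigenvalues i := by
  conv_lhs => rw [rank_one_decomp hA]
  rw [Matrix.trace_sum]
  apply Finset.sum_congr rfl
  intro i _
  rw [Matrix.trace_smul, smul_eq_mul]
  have : (Matrix.vecMulVec (⇑(hA.eigenvectorBasis i)) (⇑(hA.eigenvectorBasis i))).trace = 1 := by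
    rw [Matrix.trace]
    simp only [Matrix.diag_apply, Matrix.vecMulVec_apply, ← sq]
    exact eigvec_unit hA i
  rw [this, mul_one]

lemma eig_le_one {n : ℕ} {A : Matrix (Fin n) (Fin n) ℝ} (hA : A.IsHermitian)
    (h1 : ((1 : Matrix (Fin n) (Fin n) ℝ) - A).PosSemidef) (i : Fin n) :
    hA.eigenvalues i ≤ 1 := by
  set v : Fin n → ℝ := ⇑(hA.eigenvectorBasis i) with hv
  have hvv : v ⬝ᵥ v = 1 := by
    rw [dotProduct]
    simpa [sq] using eigvec_unit hA i
  have h2 := h1.dotProduct_mulVec_nonneg v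
  rw [Matrix.sub_mulVec, Matrix.one_mulVec, hA.mulVec_eigenvectorBasis] at h2
  simp only [star_trivial, dotProduct_sub, dotProduct_smul, smul_eq_mul, ← hv, hvv,
    mul_one] at h2
  linarith
lemma sum_w {n : ℕ} {p : ℝ} (hp : 1 ≤ p) (hpn : p ≤ n) :
    ∑ i : Fin n, (if (i:ℕ)+1 ≤ ⌊p⌋₊ then (1:ℝ) else if (i:ℕ) = ⌊p⌋₊ then p - ⌊p⌋₊ else 0)
      = p := by
  set k := ⌊p⌋₊ with hk
  have hkp : (k:ℝ) ≤ p := Nat.floor_le (by linarith)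
  have hkn : k ≤ n := by exact_mod_cast hkp.trans hpn
  rw [Fin.sum_univ_eq_sum_range (fun i => if i+1 ≤ k then (1:ℝ) else if i = k then p - (k:ℝ) else 0) n]
  rcases eq_or_lt_of_le hkn with he | hlt
  · have hpn' : p = n := le_antisymm hpn (by rw [he] at hkp; exact_mod_cast hkp)
    have hall : ∀ i ∈ Finset.range n, (if i+1 ≤ k then (1:ℝ) else if i = k then p - k else 0)
        = 1 := by
      intro i hi
      rw [if_pos (by rw [he]; exact Finset.mem_range.mp hi)]
    rw [Finset.sum_congr rfl hall, Finset.sum_const, Finset.card_range, nsmul_eq_mul, mul_one,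
      hpn']
  · have split : ∀ i ∈ Finset.range n,
        (if i+1 ≤ k then (1:ℝ) else if i = k then p - k else 0)
        = (if i < k then (1:ℝ) else 0) + (if i = k then p - (k:ℝ) else 0) := by
      intro i _
      by_cases h1 : i < k
      · simp [h1, Nat.succ_le_of_lt h1, ne_of_lt h1]
      · by_cases h2 : i = k
        · simp [h2, Nat.succ_le_iff]
        · have h3 : ¬ (i+1 ≤ k) := by omega
          simp [h1, h2, h3]
    rw [Finset.sum_congr rfl split, Finset.sum_add_distrib]
    have h1 : ∑ i ∈ Finset.range n, (if i < k then (1:ℝ) else 0) = k := by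
      rw [← Finset.sum_subset (Finset.range_subset_range.mpr hkn)
        (fun x _ hx => if_neg (by simpa using hx)),
        Finset.sum_ite_of_true (fun x hx => Finset.mem_range.mp hx)]
      simp
    have h2 : ∑ i ∈ Finset.range n, (if i = k then p - (k:ℝ) else 0) = p - k := by
      rw [Finset.sum_ite_eq' (Finset.range n) k (fun _ => p - (k:ℝ)),
        if_pos (Finset.mem_range.mpr hlt)]
    rw [h1, h2]; ring

section
variable {n : ℕ} {p : ℝ}

noncomputable def wt (n : ℕ) (p : ℝ) (i : Fin n) : ℝ :=
  if (i : ℕ) + 1 ≤ ⌊p⌋₊ then (1 : ℝ) else if (i : ℕ) = ⌊p⌋₊ then p - ⌊p⌋₊ else 0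

lemma wt_nonneg (hp : 0 ≤ p) (i : Fin n) : 0 ≤ wt n p i := by
  unfold wt
  have := Nat.floor_le hp
  split_ifs <;> linarith

lemma wt_le_one (hp : 0 ≤ p) (i : Fin n) : wt n p i ≤ 1 := by
  unfold wt
  have := Nat.lt_floor_add_one p
  split_ifs <;> linarith
end


lemma sum_sortedEig {n : ℕ} {A : Matrix (Fin n) (Fin n) ℝ} (hA : A.IsHermitian) :
    ∑ j, sortedEig A hA j = ∑ i, hA.eigenvalues i :=
  Equiv.sum_comp (Tuple.sort hA.eigenvalues) hA.eigenvalues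

lemma mono_sortedEig {n : ℕ} {A : Matrix (Fin n) (Fin n) ℝ} (hA : A.IsHermitian) :
    Monotone (sortedEig A hA) := Tuple.monotone_sort hA.eigenvalues

lemma forward_mem {n : ℕ} {p : ℝ} (hp : 1 ≤ p) (hpn : p ≤ n) (e : Fin n → ℝ)
    (he : ∑ i, e i ^ 2 = 1) :
    ∃ hA : ((1 : Matrix (Fin n) (Fin n) ℝ) - p • Matrix.vecMulVec e e).IsHermitian,
      0 ≤ ∑ i, wt n p i * sortedEig _ hA i := by
  have hp0 : (0:ℝ) ≤ p := by linarith
  have hB := psd_vmv e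
  have hA : ((1 : Matrix (Fin n) (Fin n) ℝ) - p • Matrix.vecMulVec e e).IsHermitian :=
    Matrix.isHermitian_one.sub (herm_smul p hB.1)
  refine ⟨hA, ?_⟩
  have h1A : ((1:Matrix (Fin n) (Fin n) ℝ) -
      ((1 : Matrix (Fin n) (Fin n) ℝ) - p • Matrix.vecMulVec e e)).PosSemidef := by
    rw [sub_sub_cancel]
    exact psd_smul hp0 hB
  have hle : ∀ j, sortedEig _ hA j ≤ 1 := fun j => eig_le_one hA h1A _
  have htr : ((1 : Matrix (Fin n) (Fin n) ℝ) - p • Matrix.vecMulVec e e).trace = n - p := by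
    rw [Matrix.trace_sub, Matrix.trace_one, Matrix.trace_smul]
    have : (Matrix.vecMulVec e e).trace = 1 := by
      rw [Matrix.trace]
      simp only [Matrix.diag_apply, Matrix.vecMulVec_apply, ← sq]
      exact he
    rw [this]
    simp
  have hsum : ∑ j, sortedEig _ hA j = n - p := by
    rw [sum_sortedEig hA, ← trace_eq_sum_eig hA, htr]
  have key : ∀ j, wt n p j * sortedEig _ hA j
      = (1 - wt n p j) * (1 - sortedEig _ hA j) + wt n p j + sortedEig _ hA j - 1 := by
    intro j; ring
  calc (0:ℝ) ≤ ∑ j, (1 - wt n p j) * (1 - sortedEig _ hA j) := by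
        apply Finset.sum_nonneg
        intro j _
        exact mul_nonneg (by linarith [wt_le_one (n := n) hp0 j]) (by linarith [hle j])
    _ = ∑ j, wt n p j * sortedEig _ hA j - (∑ j, wt n p j) - (∑ j, sortedEig _ hA j)
          + n := by
        rw [Finset.sum_congr rfl (fun j _ => key j)]
        simp only [Finset.sum_sub_distrib, Finset.sum_add_distrib, Finset.sum_const,
          Finset.card_univ, Fintype.card_fin, nsmul_eq_mul, mul_one]
        ring
    _ = ∑ j, wt n p j * sortedEig _ hA j := by
        rw [hsum]
        have : ∑ j, wt n p j = p := sum_w hp hpn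
        rw [this]
        ring

section
variable {n : ℕ} {M : Set (Matrix (Fin n) (Fin n) ℝ)}

lemma mem_add (hMconv : Convex ℝ M)
    (hMcone : ∀ c : ℝ, 0 ≤ c → ∀ A ∈ M, c • A ∈ M)
    {A B : Matrix (Fin n) (Fin n) ℝ} (hA : A ∈ M) (hB : B ∈ M) : A + B ∈ M := by
  have h := hMconv hA hB (by norm_num : (0:ℝ) ≤ 1/2) (by norm_num : (0:ℝ) ≤ 1/2) (by norm_num)
  have h2 := hMcone 2 (by norm_num) _ h
  have : (2:ℝ) • ((1/2 : ℝ) • A + (1/2 : ℝ) • B) = A + B := by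
    rw [smul_add, smul_smul, smul_smul]; norm_num
  rwa [this] at h2

lemma sum_mem' (hMconv : Convex ℝ M)
    (hMcone : ∀ c : ℝ, 0 ≤ c → ∀ A ∈ M, c • A ∈ M)
    (h0 : (0 : Matrix (Fin n) (Fin n) ℝ) ∈ M)
    {ι : Type*} (s : Finset ι) (f : ι → Matrix (Fin n) (Fin n) ℝ)
    (hf : ∀ i ∈ s, f i ∈ M) : ∑ i ∈ s, f i ∈ M := by
  classical
  induction s using Finset.induction_on with
  | empty => simpa using h0
  | insert x s hx ih =>
    rw [Finset.sum_insert hx]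
    exact mem_add hMconv hMcone (hf _ (Finset.mem_insert_self _ _))
      (ih fun i hi => hf i (Finset.mem_insert_of_mem hi))

end


lemma unit_mem_of_le_rieszChar {n : ℕ} {M : Set (Matrix (Fin n) (Fin n) ℝ)}
    (hMcl : IsClosed M) (hMconv : Convex ℝ M)
    (hMcone : ∀ c : ℝ, 0 ≤ c → ∀ A ∈ M, c • A ∈ M)
    (hPM : {A : Matrix (Fin n) (Fin n) ℝ | A.PosSemidef} ⊆ M)
    {p : ℝ} (hple : (p : EReal) ≤ rieszCharE M)
    (e : Fin n → ℝ) (he : ∑ i, e i ^ 2 = 1) :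
    (1 : Matrix (Fin n) (Fin n) ℝ) - p • Matrix.vecMulVec e e ∈ M := by
  have hone : (1 : Matrix (Fin n) (Fin n) ℝ) ∈ M := hPM Matrix.PosSemidef.one
  have hlt : ∀ q : ℝ, q < p → (1 : Matrix (Fin n) (Fin n) ℝ) - q • Matrix.vecMulVec e e ∈ M := by
    intro q hq
    rcases le_or_gt q 0 with hq0 | hq0
    · refine hPM ?_
      have : (1 : Matrix (Fin n) (Fin n) ℝ) - q • Matrix.vecMulVec e e
          = 1 + (-q) • Matrix.vecMulVec e e := by
        rw [neg_smul, ← sub_eq_add_neg]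
      rw [Set.mem_setOf_eq, this]
      exact Matrix.PosSemidef.one.add (psd_smul (by linarith) (psd_vmv e))
    · have hqE : (q : EReal) < rieszCharE M := lt_of_lt_of_le (by exact_mod_cast hq) hple
      rw [rieszCharE, lt_sSup_iff] at hqE
      obtain ⟨x, ⟨p', rfl, hall⟩, hqx⟩ := hqE
      have hqp' : q < p' := by exact_mod_cast hqx
      have hp'0 : 0 < p' := lt_trans hq0 hqp'
      have hmem := hall e he
      have key : (q / p') • ((1 : Matrix (Fin n) (Fin n) ℝ) - p' • Matrix.vecMulVec e e)
          + (1 - q / p') • (1 : Matrix (Fin n) (Fin n) ℝ)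
          = (1 : Matrix (Fin n) (Fin n) ℝ) - q • Matrix.vecMulVec e e := by
        rw [smul_sub, smul_smul, div_mul_cancel₀ _ (ne_of_gt hp'0), sub_smul, one_smul]
        abel
      rw [← key]
      exact mem_add hMconv hMcone
        (hMcone _ (le_of_lt (div_pos hq0 hp'0)) _ hmem)
        (hMcone _ (by
          have : q / p' ≤ 1 := (div_le_one hp'0).mpr (le_of_lt hqp')
          linarith) _ hone)
  have hcont : Continuous (fun q : ℝ => (1 : Matrix (Fin n) (Fin n) ℝ)
      - q • Matrix.vecMulVec e e) := by
    exact continuous_const.sub (continuous_id.smul continuous_const)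
  have hsub : Set.Iio p ⊆ (fun q : ℝ => (1 : Matrix (Fin n) (Fin n) ℝ)
      - q • Matrix.vecMulVec e e) ⁻¹' M := fun q hq => hlt q hq
  have hclosed : IsClosed ((fun q : ℝ => (1 : Matrix (Fin n) (Fin n) ℝ)
      - q • Matrix.vecMulVec e e) ⁻¹' M) := hMcl.preimage hcont
  have hmemp : p ∈ closure (Set.Iio p) := by
    rw [closure_Iio]; exact Set.self_mem_Iic
  exact (closure_mono hsub).trans hclosed.closure_eq.subset hmemp

lemma sum_rank_one_eq_one {n : ℕ} {A : Matrix (Fin n) (Fin n) ℝ} (hA : A.IsHermitian) :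
    ∑ i, Matrix.vecMulVec (⇑(hA.eigenvectorBasis i)) (⇑(hA.eigenvectorBasis i))
      = (1 : Matrix (Fin n) (Fin n) ℝ) := by
  have h := (Matrix.mem_unitaryGroup_iff).mp (hA.eigenvectorUnitary).2
  ext a b
  have h2 := congrFun (congrFun h a) b
  rw [Matrix.mul_apply] at h2
  simp only [Matrix.sum_apply, Matrix.vecMulVec_apply]
  rw [← h2]
  apply Finset.sum_congr rfl
  intro i _
  simp [Matrix.star_apply, mul_comm]

lemma sum_wt {n : ℕ} {p : ℝ} (hp : 1 ≤ p) (hpn : p ≤ n) : ∑ i : Fin n, wt n p i = p := by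
  unfold wt
  exact sum_w hp hpn

lemma backward_mem {n : ℕ} {M : Set (Matrix (Fin n) (Fin n) ℝ)}
    (hMconv : Convex ℝ M)
    (hMcone : ∀ c : ℝ, 0 ≤ c → ∀ A ∈ M, c • A ∈ M)
    (hPM : {A : Matrix (Fin n) (Fin n) ℝ | A.PosSemidef} ⊆ M)
    {p : ℝ} (hp : 1 ≤ p) (hpn : p ≤ n)
    (h1 : ∀ e : Fin n → ℝ, ∑ i, e i ^ 2 = 1 →
      (1 : Matrix (Fin n) (Fin n) ℝ) - p • Matrix.vecMulVec e e ∈ M)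
    {A : Matrix (Fin n) (Fin n) ℝ} (hA : A.IsHermitian)
    (hps : 0 ≤ ∑ i, wt n p i * sortedEig A hA i) : A ∈ M := by
  have hp0 : (0:ℝ) < p := by linarith
  have hn : 0 < n := by
    by_contra h
    push_neg at h
    interval_cases n
    · simp at hpn; linarith
  set k := ⌊p⌋₊ with hkdef
  have hk1 : 1 ≤ k := Nat.le_floor (by exact_mod_cast hp)
  have hkn : k ≤ n := by
    have : (k:ℝ) ≤ p := Nat.floor_le (le_of_lt hp0)
    exact_mod_cast this.trans hpn
  set lam := sortedEig A hA with hlam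
  set μ := hA.eigenvalues with hmu
  set m : Fin n := ⟨min k (n-1), by omega⟩ with hm
  -- weights
  have hw1 : ∀ j : Fin n, (j:ℕ) < (m:ℕ) → wt n p j = 1 := by
    intro j hj
    rw [wt, if_pos (by simp only [hm] at hj; omega)]
  have hw0 : ∀ j : Fin n, (m:ℕ) < (j:ℕ) → wt n p j = 0 := by
    intro j hj
    have hjn : (j:ℕ) < n := j.2
    simp only [hm] at hj
    rw [wt, if_neg (by omega), if_neg (by omega)]
  have hwm : ∀ j : Fin n, wt n p j * lam j ≤ wt n p j * lam m := by
    intro j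
    rcases le_or_gt (j:ℕ) (m:ℕ) with h | h
    · exact mul_le_mul_of_nonneg_left (mono_sortedEig hA (by exact h)) (wt_nonneg hp0.le j)
    · rw [hw0 j h]; simp
  have hlamm : 0 ≤ lam m := by
    have h2 : (0:ℝ) ≤ ∑ j, wt n p j * lam m :=
      le_trans hps (Finset.sum_le_sum fun j _ => hwm j)
    rw [← Finset.sum_mul, sum_wt hp hpn] at h2
    nlinarith
  -- the function g
  set g : ℝ → ℝ := fun C => (∑ i, max 0 (C - μ i)) - p * C with hg
  have hgcont : Continuous g := by
    apply Continuous.sub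
    · exact continuous_finset_sum _ fun i _ =>
        continuous_const.max (continuous_id.sub continuous_const)
    · exact continuous_const.mul continuous_id
  have hg0 : 0 ≤ g 0 := by
    simp only [hg]
    rw [mul_zero, sub_zero]
    exact Finset.sum_nonneg fun i _ => le_max_left _ _
  have hperm : ∀ C : ℝ, ∑ i, max 0 (C - μ i) = ∑ j, max 0 (C - lam j) := by
    intro C
    exact (Equiv.sum_comp (Tuple.sort hA.eigenvalues) (fun i => max 0 (C - μ i))).symm
  have hglam : g (lam m) ≤ 0 := by
    have hkey : ∀ j : Fin n, max 0 (lam m - lam j) + wt n p j * lam j = wt n p j * lam m := by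
      intro j
      rcases lt_trichotomy ((j:ℕ)) ((m:ℕ)) with h | h | h
      · rw [hw1 j h, one_mul, one_mul,
          max_eq_right (by linarith [mono_sortedEig hA (le_of_lt (show j < m from h))])]
        ring
      · have : j = m := Fin.ext h
        subst this
        simp
      · rw [hw0 j h, zero_mul, zero_mul,
          max_eq_left (by linarith [mono_sortedEig hA (le_of_lt (show m < j from h))])]
        ring
    have hsum2 : ∑ j, (max 0 (lam m - lam j) + wt n p j * lam j) = ∑ j, wt n p j * lam m :=
      Finset.sum_congr rfl fun j _ => hkey j
    rw [Finset.sum_add_distrib, ← Finset.sum_mul, sum_wt hp hpn] at hsum2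
    simp only [hg]
    rw [hperm]
    linarith
  obtain ⟨C, hCmem, hgC⟩ : ∃ C ∈ Set.Icc 0 (lam m), g C = 0 := by
    have := intermediate_value_Icc' hlamm hgcont.continuousOn
    have h0 : (0:ℝ) ∈ Set.Icc (g (lam m)) (g 0) := ⟨hglam, hg0⟩
    obtain ⟨C, hC, hgC⟩ := this h0
    exact ⟨C, hC, hgC⟩
  have hC0 : 0 ≤ C := hCmem.1
  have hCeq : ∑ i, max 0 (C - μ i) = p * C := by
    have := hgC
    simp only [hg] at this
    linarith
  -- decomposition
  set v : Fin n → Fin n → ℝ := fun i => ⇑(hA.eigenvectorBasis i) with hv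
  set Q : Fin n → Matrix (Fin n) (Fin n) ℝ := fun i => Matrix.vecMulVec (v i) (v i) with hQ
  set c : Fin n → ℝ := fun i => max 0 (C - μ i) with hc
  set d : Fin n → ℝ := fun i => max 0 (μ i - C) with hd
  have hdecomp : A = (∑ i, (c i / p) • ((1 : Matrix (Fin n) (Fin n) ℝ) - p • Q i))
      + ∑ i, d i • Q i := by
    have e1 : ∀ i : Fin n, (c i / p) • ((1 : Matrix (Fin n) (Fin n) ℝ) - p • Q i)
        = (c i / p) • (1 : Matrix (Fin n) (Fin n) ℝ) - c i • Q i := by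
      intro i
      rw [smul_sub, smul_smul, div_mul_cancel₀ _ (ne_of_gt hp0)]
    rw [Finset.sum_congr rfl fun i _ => e1 i, Finset.sum_sub_distrib, ← Finset.sum_smul]
    have e2 : ∑ i, c i / p = C := by
      rw [← Finset.sum_div, hCeq, mul_comm, mul_div_assoc, div_self (ne_of_gt hp0), mul_one]
    rw [e2]
    have hQsum : ∑ x, Q x = (1 : Matrix (Fin n) (Fin n) ℝ) := by
      rw [hQ]; exact sum_rank_one_eq_one hA
    have e3 : (C : ℝ) • (1 : Matrix (Fin n) (Fin n) ℝ) = ∑ i, C • Q i := by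
      rw [← hQsum, Finset.smul_sum]
    rw [e3, ← Finset.sum_sub_distrib, ← Finset.sum_add_distrib]
    conv_lhs => rw [rank_one_decomp hA]
    apply Finset.sum_congr rfl
    intro i _
    have : C • Q i - c i • Q i + d i • Q i = (C - c i + d i) • Q i := by
      rw [add_smul, sub_smul]
    rw [this]
    have : C - c i + d i = μ i := by
      simp only [hc, hd]
      rcases le_total (μ i) C with h | h
      · rw [max_eq_right (by linarith), max_eq_left (by linarith)]; ring
      · rw [max_eq_left (by linarith), max_eq_right (by linarith)]; ring
    rw [this]
  rw [hdecomp]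
  have h0M : (0 : Matrix (Fin n) (Fin n) ℝ) ∈ M := hPM Matrix.PosSemidef.zero
  apply mem_add hMconv hMcone
  · apply sum_mem' hMconv hMcone h0M
    intro i _
    exact hMcone _ (div_nonneg (le_max_left _ _) hp0.le) _ (h1 (v i) (eigvec_unit hA i))
  · apply sum_mem' hMconv hMcone h0M
    intro i _
    exact hPM (psd_smul (le_max_left _ _) (psd_vmv (v i)))

end AuxRiesz

/-- **6.2.1.** For a closed convex cone `M ⊂ Sym²(ℝⁿ)` containing the
positive semidefinite matrices `𝒫`, and `1 ≤ p ≤ n`, one has `𝒫(p) ⊆ M ↔ p ≤ p_M`. -/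
theorem pCone_subset_iff_le_rieszChar (n : ℕ) (M : Set (Matrix (Fin n) (Fin n) ℝ))
    (hMcl : IsClosed M) (hMconv : Convex ℝ M)
    (hMcone : ∀ c : ℝ, 0 ≤ c → ∀ A ∈ M, c • A ∈ M)
    (hMsym : ∀ A ∈ M, A.IsHermitian)
    (hPM : {A : Matrix (Fin n) (Fin n) ℝ | A.PosSemidef} ⊆ M)
    (p : ℝ) (hp : 1 ≤ p) (hpn : p ≤ n) :
    pCone n p ⊆ M ↔ (p : EReal) ≤ rieszCharE M := by
  constructor
  · intro hsub
    apply le_sSup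
    refine ⟨p, rfl, fun e he => hsub ?_⟩
    exact forward_mem hp hpn e he
  · intro hle A hAmem
    obtain ⟨hA, hps⟩ := hAmem
    exact backward_mem hMconv hMcone hPM hp hpn
      (fun e he => unit_mem_of_le_rieszChar hMcl hMconv hMcone hPM hle e he) hA hps
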